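/- Let (p_k)_{k≥1} be a summable sequence of real numbers such that the sequence k ↦ d_k·|Σ_{i≥k} p_i| is summable, and suppose W := inf_{k≥1} d_k/k > 0. Then the sequence k ↦ k·|p_k| is summable and Σ_{k≥1} k·|p_k| ≤ (2/W)·Σ_{k≥1} d_k·|Σ_{i≥k} p_i|; that is, ‖p‖_{1E} ≤ (2/W)‖p‖_{1D}. -/
import Mathlib


/-- Let `(d_k)_{k≥1}` be a nondecreasing sequence of positive reals with
`d_1 = 1` (here `d k` stands for `d_{k+1}`).  Let `(p_k)_{k≥1}` be a summable real sequence
(here `p k` stands for `p_{k+1}`) such that `k ↦ d_k·|Σ_{i≥k} p_i|` is summable, and suppose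
`W := inf_{k≥1} d_k / k > 0`.  Then `k ↦ k·|p_k|` is summable and
`Σ_{k≥1} k·|p_k| ≤ (2/W)·Σ_{k≥1} d_k·|Σ_{i≥k} p_i|`, i.e. `‖p‖_{1E} ≤ (2/W)·‖p‖_{1D}`. -/
theorem norm1E_le_two_div_W_mul_norm1D
    (d : ℕ → ℝ) (hd1 : d 0 = 1) (hdpos : ∀ k, 0 < d k) (hdmono : Monotone d)
    (W : ℝ) (hW : W = ⨅ k : ℕ, d k / (k + 1)) (hWpos : 0 < W)
    (p : ℕ → ℝ) (hp : Summable p)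
    (hD : Summable (fun k : ℕ => d k * |∑' i : ℕ, p (k + i)|)) :
    Summable (fun k : ℕ => (k + 1 : ℝ) * |p k|) ∧
      (∑' k : ℕ, (k + 1 : ℝ) * |p k|) ≤
        (2 / W) * ∑' k : ℕ, d k * |∑' i : ℕ, p (k + i)| := by
  set T : ℕ → ℝ := fun k => ∑' i : ℕ, p (k + i) with hTdef
  have hTsum : ∀ k, Summable fun i => p (k + i) := by
    intro k
    have := (summable_nat_add_iff k).2 hp
    simpa [add_comm] using this
  have hrec : ∀ k, T k = p k + T (k + 1) := by
    intro k
    have h := Summable.tsum_eq_zero_add (hTsum k)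
    simpa [hTdef, add_assoc, add_comm, add_left_comm] using h
  have habs : ∀ k, |p k| ≤ |T k| + |T (k + 1)| := by
    intro k
    have : p k = T k - T (k + 1) := by linarith [hrec k]
    rw [this]
    exact (abs_sub _ _)
  -- W ≤ d k / (k+1)
  have hWle : ∀ k : ℕ, (k + 1 : ℝ) * W ≤ d k := by
    intro k
    have hbdd : BddBelow (Set.range fun k : ℕ => d k / (k + 1)) := by
      refine ⟨0, ?_⟩
      rintro x ⟨k, rfl⟩
      exact div_nonneg (hdpos k).le (by positivity)
    have h : W ≤ d k / (k + 1) := hW ▸ ciInf_le hbdd k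
    have hk : (0 : ℝ) < (k : ℝ) + 1 := by positivity
    rw [le_div_iff₀ hk] at h
    linarith
  set f : ℕ → ℝ := fun k => d k * |T k| with hfdef
  have hf0 : ∀ k, 0 ≤ f k := fun k => mul_nonneg (hdpos k).le (abs_nonneg _)
  set g : ℕ → ℝ := fun k => (1 / W) * (f k + f (k + 1)) with hgdef
  have hkey : ∀ k : ℕ, (k + 1 : ℝ) * |p k| ≤ g k := by
    intro k
    have h1 : (k + 1 : ℝ) * |p k| ≤ (d k / W) * (|T k| + |T (k + 1)|) := by
      have hk1 : (k + 1 : ℝ) ≤ d k / W := by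
        rw [le_div_iff₀ hWpos]; exact hWle k
      have := mul_le_mul hk1 (habs k) (abs_nonneg _)
        (div_nonneg (hdpos k).le hWpos.le)
      exact this
    have h2 : (d k / W) * (|T k| + |T (k + 1)|) ≤ g k := by
      have hd' : d k ≤ d (k + 1) := hdmono (Nat.le_succ k)
      have : d k * |T k| + d k * |T (k+1)| ≤ f k + f (k+1) := by
        simp only [hfdef]
        have := mul_le_mul_of_nonneg_right hd' (abs_nonneg (T (k+1)))
        linarith
      have hW' : 0 ≤ 1 / W := le_of_lt (by positivity)
      calc (d k / W) * (|T k| + |T (k + 1)|)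
          = (1 / W) * (d k * |T k| + d k * |T (k+1)|) := by ring
        _ ≤ (1 / W) * (f k + f (k+1)) := by
            exact mul_le_mul_of_nonneg_left this hW'
        _ = g k := rfl
    linarith
  have hfS : Summable f := hD
  have hfS' : Summable fun k => f (k + 1) := (summable_nat_add_iff 1).2 hfS
  have hgS : Summable g := ((hfS.add hfS').mul_left _)
  have hsum : Summable fun k : ℕ => (k + 1 : ℝ) * |p k| :=
    Summable.of_nonneg_of_le (fun k => by positivity) hkey hgS
  refine ⟨hsum, ?_⟩
  have hS'le : (∑' k, f (k + 1)) ≤ ∑' k, f k := by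
    have h := Summable.tsum_eq_zero_add hfS
    have := hf0 0
    linarith [h]
  calc (∑' k : ℕ, (k + 1 : ℝ) * |p k|) ≤ ∑' k, g k := Summable.tsum_le_tsum hkey hsum hgS
    _ = (1 / W) * ((∑' k, f k) + ∑' k, f (k + 1)) := by
        rw [hgdef, tsum_mul_left, Summable.tsum_add hfS hfS']
    _ ≤ (1 / W) * ((∑' k, f k) + ∑' k, f k) := by
        have hW' : 0 ≤ 1 / W := le_of_lt (by positivity)
        exact mul_le_mul_of_nonneg_left (by linarith) hW'
    _ = (2 / W) * ∑' k, f k := by ring
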